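/- arXiv:2205.01510 — 3 statements merged into one kernel-verified Lean document; each statement's English description precedes it below -/
import Mathlib

section
/- For the open uniform knot sequence on [0,1] with N ≥ p+1 B-splines of degree p, the B-splines B_{N,p,1}, ..., B_{N,p,N} sum to one at every point x ∈ [0,1) (partition of unity). -/
noncomputable def coxDeBoor (ξ : ℕ → ℝ) : ℕ → ℕ → ℝ → ℝ
  | 0, n, x => if ξ n ≤ x ∧ x < ξ (n + 1) then 1 else 0
  | p + 1, n, x =>
      (x - ξ n) / (ξ (n + p + 1) - ξ n) * coxDeBoor ξ p n x
        + (ξ (n + p + 2) - x) / (ξ (n + p + 2) - ξ (n + 1)) * coxDeBoor ξ p (n + 1) x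

/-- Open uniform knot sequence on `[0,1]`: `ξ_1 = ⋯ = ξ_{p+1} = 0`,
`ξ_{p+i+1} = i/(N-p)`, `ξ_{N+1} = ⋯ = ξ_{N+p+1} = 1`. -/
noncomputable def openKnots (N p : ℕ) (i : ℕ) : ℝ :=
  min 1 (max 0 (((i : ℝ) - p - 1) / ((N : ℝ) - p)))

/-- B-splines on the open uniform knot sequence, made left continuous at `x = 1`. -/
noncomputable def uBspline (N p n : ℕ) (x : ℝ) : ℝ :=
  if x = 1 then (if n = N then 1 else 0) else coxDeBoor (openKnots N p) p n x

/-- B-splines vanish outside `[ξ n, ξ (n+q+1))`. -/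
lemma coxDeBoor_support {ξ : ℕ → ℝ} (hξ : Monotone ξ) :
    ∀ (q n : ℕ) (x : ℝ), (x < ξ n ∨ ξ (n + q + 1) ≤ x) → coxDeBoor ξ q n x = 0 := by
  intro q
  induction q with
  | zero =>
    intro n x h
    simp only [coxDeBoor]
    rw [if_neg]
    rintro ⟨h1, h2⟩
    rcases h with h | h
    · linarith
    · exact absurd h2 (not_lt.mpr h)
  | succ q ih =>
    intro n x h
    simp only [coxDeBoor]
    have h1 : coxDeBoor ξ q n x = 0 := by
      apply ih
      rcases h with h | h
      · exact Or.inl h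
      · exact Or.inr (le_trans (hξ (by omega)) h)
    have h2 : coxDeBoor ξ q (n + 1) x = 0 := by
      apply ih
      rcases h with h | h
      · exact Or.inl (lt_of_lt_of_le h (hξ (by omega)))
      · right
        have e : n + 1 + q + 1 = n + q + 2 := by omega
        rw [e]; exact h
    rw [h1, h2]; ring

/-- Sum of degree-zero B-splines is the indicator of `[ξ a, ξ (b+1))`. -/
lemma sum_deg_zero {ξ : ℕ → ℝ} (hξ : Monotone ξ) (x : ℝ) :
    ∀ (b a : ℕ), a ≤ b + 1 →
      (∑ n ∈ Finset.Icc a b, (if ξ n ≤ x ∧ x < ξ (n + 1) then (1 : ℝ) else 0))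
        = if ξ a ≤ x ∧ x < ξ (b + 1) then 1 else 0 := by
  intro b
  induction b with
  | zero =>
    intro a ha
    interval_cases a
    · rw [Finset.Icc_self, Finset.sum_singleton]
    · rw [show Finset.Icc 1 0 = ∅ from rfl, Finset.sum_empty, if_neg]
      rintro ⟨h1, h2⟩; linarith
  | succ b ih =>
    intro a ha
    rcases Nat.lt_or_ge a (b + 2) with h | h
    · have hab : a ≤ b + 1 := by omega
      rw [← Finset.sum_Ico_add_eq_sum_Icc hab, Finset.Ico_add_one_right_eq_Icc, ih a hab]
      have m1 : ξ a ≤ ξ (b + 1) := hξ (by omega)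
      have m2 : ξ (b + 1) ≤ ξ (b + 1 + 1) := hξ (by omega)
      split_ifs with p1 p2 p3 p3 p2 p3 p3
      · linarith [p1.2, p2.1]
      · linarith [p1.2, p2.1]
      · norm_num
      · exfalso; exact p3 ⟨p1.1, lt_of_lt_of_le p1.2 m2⟩
      · norm_num
      · exfalso; exact p3 ⟨le_trans m1 p2.1, p2.2⟩
      · exfalso
        rcases lt_or_ge x (ξ (b + 1)) with hh | hh
        · exact p1 ⟨p3.1, hh⟩
        · exact p2 ⟨hh, p3.2⟩
      · norm_num
    · rw [Finset.Icc_eq_empty (by omega), Finset.sum_empty, if_neg]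
      rintro ⟨h1, h2⟩
      have : ξ (b + 1 + 1) ≤ ξ a := hξ (by omega)
      linarith

lemma openKnots_monotone (N p : ℕ) (hN : p + 1 ≤ N) : Monotone (openKnots N p) := by
  intro i j h
  have hD : (0:ℝ) < (N : ℝ) - p := by
    have : (p:ℝ) + 1 ≤ N := by exact_mod_cast hN
    linarith
  unfold openKnots
  apply min_le_min le_rfl
  apply max_le_max le_rfl
  apply div_le_div_of_nonneg_right ?_ hD.le
  have : (i:ℝ) ≤ j := by exact_mod_cast h
  linarith

lemma openKnots_zero (N p i : ℕ) (hN : p + 1 ≤ N) (hi : i ≤ p + 1) :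
    openKnots N p i = 0 := by
  have hD : (0:ℝ) < (N : ℝ) - p := by
    have : (p:ℝ) + 1 ≤ N := by exact_mod_cast hN
    linarith
  have hnum : (i : ℝ) - p - 1 ≤ 0 := by
    have : (i:ℝ) ≤ (p:ℝ) + 1 := by exact_mod_cast hi
    linarith
  have : ((i : ℝ) - p - 1) / ((N : ℝ) - p) ≤ 0 := div_nonpos_of_nonpos_of_nonneg hnum hD.le
  unfold openKnots
  rw [max_eq_left this, min_eq_right (by norm_num)]

lemma openKnots_one (N p i : ℕ) (hN : p + 1 ≤ N) (hi : N + 1 ≤ i) :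
    openKnots N p i = 1 := by
  have hD : (0:ℝ) < (N : ℝ) - p := by
    have : (p:ℝ) + 1 ≤ N := by exact_mod_cast hN
    linarith
  have hnum : (N : ℝ) - p ≤ (i : ℝ) - p - 1 := by
    have : (N:ℝ) + 1 ≤ i := by exact_mod_cast hi
    linarith
  have h1 : (1:ℝ) ≤ ((i : ℝ) - p - 1) / ((N : ℝ) - p) := (one_le_div hD).mpr hnum
  unfold openKnots
  rw [min_eq_left (le_max_of_le_right h1)]

lemma bspline_sum (N p : ℕ) (hN : p + 1 ≤ N) (x : ℝ) (hx0 : 0 ≤ x) (hx1 : x < 1) :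
    ∀ q, q ≤ p → ∑ n ∈ Finset.Icc (p + 1 - q) N, coxDeBoor (openKnots N p) q n x = 1 := by
  have hmono : Monotone (openKnots N p) := openKnots_monotone N p hN
  set ξ := openKnots N p with hξdef
  intro q
  induction q with
  | zero =>
    intro _
    simp only [coxDeBoor, Nat.sub_zero]
    rw [sum_deg_zero hmono x N (p + 1) (by omega), if_pos]
    constructor
    · rw [hξdef, openKnots_zero N p (p + 1) hN le_rfl]; exact hx0
    · rw [hξdef, openKnots_one N p (N + 1) hN le_rfl]; exact hx1
  | succ q ih =>
    intro hq
    have hq' : q ≤ p := by omega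
    have IH := ih hq'
    have e0 : p + 1 - (q + 1) = p - q := by omega
    have e1 : p + 1 - q = p - q + 1 := by omega
    rw [e1] at IH
    rw [e0]
    simp only [coxDeBoor]
    rw [Finset.sum_add_distrib]
    -- first sum: peel off the bottom term, which vanishes
    rw [← Finset.add_sum_Ioc_eq_sum_Icc (show p - q ≤ N by omega), ← Finset.Icc_add_one_left_eq_Ioc]
    have hbot : (x - ξ (p - q)) / (ξ (p - q + q + 1) - ξ (p - q)) * coxDeBoor ξ q (p - q) x
        = 0 := by
      have e2 : p - q + q + 1 = p + 1 := by omega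
      rw [e2, hξdef, openKnots_zero N p (p + 1) hN le_rfl,
        openKnots_zero N p (p - q) hN (by omega)]
      norm_num
    rw [hbot, zero_add]
    -- second sum: reindex by `n ↦ n + 1`
    have reidx : (∑ n ∈ Finset.Icc (p - q) N,
          (ξ (n + q + 2) - x) / (ξ (n + q + 2) - ξ (n + 1)) * coxDeBoor ξ q (n + 1) x)
        = ∑ m ∈ Finset.Icc (p - q + 1) (N + 1),
          (ξ (m + q + 1) - x) / (ξ (m + q + 1) - ξ m) * coxDeBoor ξ q m x := by
      rw [← Finset.map_add_right_Icc (p - q) N 1, Finset.sum_map]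
      apply Finset.sum_congr rfl
      intro n hn
      simp only [addRightEmbedding_apply]
      have e3 : n + 1 + q + 1 = n + q + 2 := by omega
      rw [e3]
    rw [reidx, ← Finset.sum_Ico_add_eq_sum_Icc (show p - q + 1 ≤ N + 1 by omega),
      Finset.Ico_add_one_right_eq_Icc]
    have htop : (ξ (N + 1 + q + 1) - x) / (ξ (N + 1 + q + 1) - ξ (N + 1))
        * coxDeBoor ξ q (N + 1) x = 0 := by
      have hB : coxDeBoor ξ q (N + 1) x = 0 := by
        apply coxDeBoor_support hmono
        left
        rw [hξdef, openKnots_one N p (N + 1) hN le_rfl]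
        exact hx1
      rw [hB, mul_zero]
    rw [htop, add_zero, ← Finset.sum_add_distrib]
    have point : ∀ n ∈ Finset.Icc (p - q + 1) N,
        (x - ξ n) / (ξ (n + q + 1) - ξ n) * coxDeBoor ξ q n x
          + (ξ (n + q + 1) - x) / (ξ (n + q + 1) - ξ n) * coxDeBoor ξ q n x
        = coxDeBoor ξ q n x := by
      intro n _
      rcases eq_or_ne (ξ (n + q + 1) - ξ n) 0 with hd | hd
      · have hB : coxDeBoor ξ q n x = 0 := by
          apply coxDeBoor_support hmono
          rcases le_or_gt (ξ n) x with hh | hh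
          · right; linarith [sub_eq_zero.mp hd]
          · exact Or.inl hh
        rw [hB]; ring
      · field_simp
        ring
    rw [Finset.sum_congr rfl point]
    exact IH

/-- Partition of unity: for `N ≥ p+1`, the B-splines `B_{N,p,1}, …, B_{N,p,N}` sum to one
on `[0,1)`. -/
theorem bspline_partition_of_unity (N p : ℕ) (hN : p + 1 ≤ N) :
    ∀ x ∈ Set.Ico (0 : ℝ) 1, ∑ n ∈ Finset.Icc 1 N, uBspline N p n x = 1 := by
  rintro x ⟨hx0, hx1⟩
  have hx1' : x ≠ 1 := ne_of_lt hx1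
  simp only [uBspline, if_neg hx1']
  have h := bspline_sum N p hN x hx0 hx1 p le_rfl
  rwa [show p + 1 - p = 1 from by omega] at h
end

section
/- For p ≥ 1 and a knot sequence with ξ_n < ξ_{n+p+1}, the integral of B_{ξ,p,n} over [ξ_n, ξ_{n+p+1}] equals (ξ_{n+p+1} - ξ_n)/(p+1). -/
open Nat (factorial)
local notation:10000 n "!" => Nat.factorial n

/-- complete homogeneous symmetric polynomial `h_k(ξ n, …, ξ (n+c-1))` -/
noncomputable def hpoly (ξ : ℕ → ℝ) : ℕ → ℕ → ℕ → ℝ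
  | 0, _, _ => 1
  | _+1, _, 0 => 0
  | k+1, n, c+1 => hpoly ξ (k+1) n c + ξ (n+c) * hpoly ξ k n (c+1)
termination_by k _ c => (k, c)

lemma hpoly_zero (ξ : ℕ → ℝ) (n c : ℕ) : hpoly ξ 0 n c = 1 := by simp [hpoly]
lemma hpoly_succ_zero (ξ : ℕ → ℝ) (k n : ℕ) : hpoly ξ (k+1) n 0 = 0 := by simp [hpoly]
lemma hpoly_rec (ξ : ℕ → ℝ) (k n c : ℕ) :
    hpoly ξ (k+1) n (c+1) = hpoly ξ (k+1) n c + ξ (n+c) * hpoly ξ k n (c+1) := by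
  rw [hpoly]

lemma hpoly_one (ξ : ℕ → ℝ) (k n : ℕ) : hpoly ξ k n 1 = ξ n ^ k := by
  induction k with
  | zero => simp [hpoly_zero]
  | succ k ih => rw [hpoly_rec, hpoly_succ_zero, ih]; ring

/-- front removal: `h_{k+1}(x_n..x_{n+c}) = h_{k+1}(x_{n+1}..x_{n+c}) + x_n h_k(x_n..x_{n+c})` -/
theorem hpoly_front (ξ : ℕ → ℝ) (k c n : ℕ) :
    hpoly ξ (k+1) n (c+1) = hpoly ξ (k+1) (n+1) c + ξ n * hpoly ξ k n (c+1) := by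
  match c, k with
  | 0, k =>
    rw [hpoly_rec, hpoly_succ_zero, hpoly_succ_zero]
    simp
  | c+1, 0 =>
    have h1 := hpoly_front ξ 0 c n
    have e0 := hpoly_rec ξ 0 n (c+1)
    have e3 := hpoly_rec ξ 0 (n+1) c
    rw [show n+1+c = n+(c+1) from by omega] at e3
    simp only [hpoly_zero] at e0 h1 e3 ⊢
    linear_combination e0 + h1 - e3
  | c+1, k+1 =>
    have h1 := hpoly_front ξ (k+1) c n
    have h2 := hpoly_front ξ k (c+1) n
    have e3 := hpoly_rec ξ (k+1) (n+1) c
    rw [show n+1+c = n+(c+1) from by omega] at e3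
    linear_combination hpoly_rec ξ (k+1) n (c+1) + h1 - e3
      + ξ (n+(c+1)) * h2 - ξ n * hpoly_rec ξ k n (c+1)
termination_by (k, c)

/-- `h_{k+1}(S1) - h_{k+1}(S2) = (x_n - x_{n+c+1}) h_k(S)` -/
theorem hpoly_diff (ξ : ℕ → ℝ) (k c n : ℕ) :
    hpoly ξ (k+1) n (c+1) - hpoly ξ (k+1) (n+1) (c+1)
      = (ξ n - ξ (n+c+1)) * hpoly ξ k n (c+2) := by
  induction k with
  | zero =>
    have f1 := hpoly_front ξ 0 c n
    have e2 := hpoly_rec ξ 0 (n+1) c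
    rw [show n+1+c = n+(c+1) from by omega] at e2
    simp only [hpoly_zero] at f1 e2 ⊢
    rw [show n+c+1 = n+(c+1) from by omega]
    linear_combination f1 - e2
  | succ k ih =>
    have f1 := hpoly_front ξ (k+1) c n
    have e2 := hpoly_rec ξ (k+1) (n+1) c
    rw [show n+1+c = n+(c+1) from by omega] at e2
    have e3 := hpoly_rec ξ k n (c+1)
    rw [show n+c+1 = n+(c+1) from by omega] at *
    linear_combination f1 - e2 + ξ (n+(c+1)) * ih - (ξ n - ξ (n+(c+1))) * e3

/-- `x_n h_k(S1) - x_{n+c+1} h_k(S2) = (x_n - x_{n+c+1}) h_k(S)` -/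
theorem hpoly_key2 (ξ : ℕ → ℝ) (k c n : ℕ) :
    ξ n * hpoly ξ k n (c+1) - ξ (n+c+1) * hpoly ξ k (n+1) (c+1)
      = (ξ n - ξ (n+c+1)) * hpoly ξ k n (c+2) := by
  cases k with
  | zero => simp [hpoly_zero]
  | succ k =>
    have e1 := hpoly_rec ξ k n (c+1)
    have f1 := hpoly_front ξ k (c+1) n
    rw [show n+c+1 = n+(c+1) from by omega] at *
    linear_combination ξ (n+(c+1)) * f1 - ξ n * e1

/-- when all involved knots are equal: `(k+1) h_{k+1} = a (c+k) h_k` -/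
theorem hpoly_const (ξ : ℕ → ℝ) (a : ℝ) (k c n : ℕ) (hc : ∀ i, i < c → ξ (n+i) = a) :
    (k+1 : ℝ) * hpoly ξ (k+1) n c = a * (c+k : ℝ) * hpoly ξ k n c := by
  match k, c with
  | k, 0 =>
    rcases k with _ | k <;> simp [hpoly_zero, hpoly_succ_zero]
  | 0, c+1 =>
    have ih := hpoly_const ξ a 0 c n (fun i hi => hc i (by omega))
    have e0 := hpoly_rec ξ 0 n c
    rw [hc c (by omega)] at e0
    simp only [hpoly_zero] at ih e0 ⊢
    push_cast
    push_cast at ih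
    linear_combination e0 + ih
  | k+1, c+1 =>
    have ih1 := hpoly_const ξ a (k+1) c n (fun i hi => hc i (by omega))
    have ih2 := hpoly_const ξ a k (c+1) n hc
    have e0 := hpoly_rec ξ (k+1) n c
    have e1 := hpoly_rec ξ k n c
    rw [hc c (by omega)] at e0 e1
    push_cast at ih1 ih2 ⊢
    linear_combination ((k:ℝ)+2) * e0 + ih1 - a*((c:ℝ)+(k:ℝ)+1)*e1 + a*ih2
termination_by (k, c)

/-- two-variable geometric identity -/
theorem hpoly_geom (ξ : ℕ → ℝ) (k n : ℕ) :
    (ξ (n+1) - ξ n) * hpoly ξ k n 2 = ξ (n+1) ^ (k+1) - ξ n ^ (k+1) := by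
  induction k with
  | zero => simp [hpoly_zero]
  | succ k ih =>
    rw [hpoly_rec, hpoly_one]
    linear_combination ξ (n+1) * ih

lemma cdB_zero_def (ξ : ℕ → ℝ) (n : ℕ) (x : ℝ) :
    coxDeBoor ξ 0 n x = if ξ n ≤ x ∧ x < ξ (n + 1) then 1 else 0 := rfl

lemma cdB_succ_def (ξ : ℕ → ℝ) (p n : ℕ) (x : ℝ) :
    coxDeBoor ξ (p+1) n x =
      (x - ξ n) / (ξ (n + p + 1) - ξ n) * coxDeBoor ξ p n x
        + (ξ (n + p + 2) - x) / (ξ (n + p + 2) - ξ (n + 1)) * coxDeBoor ξ p (n + 1) x := rfl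

lemma cdB_outside_left (ξ : ℕ → ℝ) (hξ : Monotone ξ) (p : ℕ) :
    ∀ n x, x < ξ n → coxDeBoor ξ p n x = 0 := by
  induction p with
  | zero =>
    intro n x hx
    rw [cdB_zero_def, if_neg]
    rintro ⟨h1, -⟩; linarith
  | succ p ih =>
    intro n x hx
    rw [cdB_succ_def, ih n x hx, ih (n+1) x (lt_of_lt_of_le hx (hξ (by omega)))]
    ring

lemma cdB_outside_right (ξ : ℕ → ℝ) (hξ : Monotone ξ) (p : ℕ) :
    ∀ n x, ξ (n + p + 1) ≤ x → coxDeBoor ξ p n x = 0 := by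
  induction p with
  | zero =>
    intro n x hx
    rw [cdB_zero_def, if_neg]
    rintro ⟨-, h2⟩; linarith
  | succ p ih =>
    intro n x hx
    rw [cdB_succ_def, ih n x (le_trans (hξ (by omega)) hx),
      ih (n+1) x (le_trans (le_of_eq (by ring_nf)) hx)]
    ring

lemma cdB_degenerate (ξ : ℕ → ℝ) (hξ : Monotone ξ) (p n : ℕ)
    (hz : ξ n = ξ (n + p + 1)) : ∀ x, coxDeBoor ξ p n x = 0 := by
  intro x
  cases p with
  | zero =>
    rw [cdB_zero_def, if_neg]
    rintro ⟨h1, h2⟩; rw [hz] at h1; linarith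
  | succ p =>
    have h1 : ξ (n + p + 1) = ξ n :=
      le_antisymm (hz ▸ hξ (by omega)) (hξ (by omega))
    have h2 : ξ (n + p + 2) = ξ (n + 1) :=
      le_antisymm (hz ▸ hξ (by omega)) (hξ (by omega))
    rw [cdB_succ_def, h1, h2]
    simp

lemma cdB_measurable (ξ : ℕ → ℝ) (p : ℕ) : ∀ n, Measurable (coxDeBoor ξ p n) := by
  induction p with
  | zero =>
    intro n
    have : coxDeBoor ξ 0 n = (Set.Ico (ξ n) (ξ (n+1))).indicator (fun _ => (1:ℝ)) := by
      funext x
      rw [cdB_zero_def]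
      simp only [Set.indicator_apply, Set.mem_Ico]
    rw [this]
    exact (measurable_const).indicator measurableSet_Ico
  | succ p ih =>
    intro n
    rw [show coxDeBoor ξ (p+1) n = fun x => (x - ξ n) / (ξ (n + p + 1) - ξ n) * coxDeBoor ξ p n x
        + (ξ (n + p + 2) - x) / (ξ (n + p + 2) - ξ (n + 1)) * coxDeBoor ξ p (n + 1) x from rfl]
    exact (((measurable_id.sub measurable_const).div_const _).mul (ih n)).add
      (((measurable_const.sub measurable_id).div_const _).mul (ih (n+1)))

lemma cdB_intervalIntegrable (ξ : ℕ → ℝ) (p : ℕ) :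
    ∀ n a b, IntervalIntegrable (coxDeBoor ξ p n) MeasureTheory.volume a b := by
  induction p with
  | zero =>
    intro n a b
    have : coxDeBoor ξ 0 n = (Set.Ico (ξ n) (ξ (n+1))).indicator (fun _ => (1:ℝ)) := by
      funext x
      rw [cdB_zero_def]
      simp only [Set.indicator_apply, Set.mem_Ico]
    rw [this]
    apply MeasureTheory.Integrable.intervalIntegrable
    rw [MeasureTheory.integrable_indicator_iff measurableSet_Ico]
    apply (MeasureTheory.integrableOn_const_iff (C := (1:ℝ)) (by simp)).2
    right
    exact measure_Ico_lt_top
  | succ p ih =>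
    intro n a b
    rw [show coxDeBoor ξ (p+1) n = fun x => (x - ξ n) / (ξ (n + p + 1) - ξ n) * coxDeBoor ξ p n x
        + (ξ (n + p + 2) - x) / (ξ (n + p + 2) - ξ (n + 1)) * coxDeBoor ξ p (n + 1) x from rfl]
    apply IntervalIntegrable.add
    · exact IntervalIntegrable.continuousOn_mul (ih n a b)
        (Continuous.continuousOn (by continuity))
    · exact IntervalIntegrable.continuousOn_mul (ih (n+1) a b)
        (Continuous.continuousOn (by continuity))

lemma cdB_mul_intervalIntegrable (ξ : ℕ → ℝ) (p n : ℕ) (f : ℝ → ℝ) (hf : Continuous f)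
    (a b : ℝ) : IntervalIntegrable (fun x => f x * coxDeBoor ξ p n x) MeasureTheory.volume a b :=
  IntervalIntegrable.continuousOn_mul (cdB_intervalIntegrable ξ p n a b) hf.continuousOn

open intervalIntegral MeasureTheory in
lemma cdB_linear_moment (ξ : ℕ → ℝ) (p n k : ℕ) (u v a b : ℝ) :
    ∫ x in a..b, (u*x + v) * x^k * coxDeBoor ξ p n x
      = u * (∫ x in a..b, x^(k+1) * coxDeBoor ξ p n x)
        + v * (∫ x in a..b, x^k * coxDeBoor ξ p n x) := by
  have I1 : IntervalIntegrable (fun x => u * (x^(k+1) * coxDeBoor ξ p n x)) volume a b := by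
    have := cdB_mul_intervalIntegrable ξ p n (fun x => u * x^(k+1)) (by continuity) a b
    simpa [mul_assoc] using this
  have I2 : IntervalIntegrable (fun x => v * (x^k * coxDeBoor ξ p n x)) volume a b := by
    have := cdB_mul_intervalIntegrable ξ p n (fun x => v * x^k) (by continuity) a b
    simpa [mul_assoc] using this
  rw [← intervalIntegral.integral_const_mul, ← intervalIntegral.integral_const_mul,
    ← intervalIntegral.integral_add I1 I2]
  apply intervalIntegral.integral_congr
  intro x hx
  ring

open intervalIntegral MeasureTheory in
lemma cdB_moment_base (ξ : ℕ → ℝ) (hξ : Monotone ξ) (k n : ℕ) :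
    ∫ x in (ξ n)..(ξ (n+1)), x^k * coxDeBoor ξ 0 n x
      = (ξ (n+1) - ξ n) * ((k ! : ℝ) * (0 ! : ℝ) / ((0+k+1) ! : ℝ)) * hpoly ξ k n 2 := by
  have hb : ∀ᵐ (x:ℝ) ∂(volume : Measure ℝ), x ≠ ξ (n+1) := by
    rw [MeasureTheory.ae_iff]
    simpa using (Real.volume_singleton : volume ({ξ (n+1)} : Set ℝ) = 0)
  have hle : ξ n ≤ ξ (n+1) := hξ (by omega)
  have congr1 : ∫ x in (ξ n)..(ξ (n+1)), x^k * coxDeBoor ξ 0 n x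
      = ∫ x in (ξ n)..(ξ (n+1)), x^k := by
    apply intervalIntegral.integral_congr_ae
    filter_upwards [hb] with x hx hmem
    rw [Set.uIoc_of_le hle] at hmem
    rw [cdB_zero_def, if_pos ⟨le_of_lt hmem.1, lt_of_le_of_ne hmem.2 hx⟩, mul_one]
  rw [congr1, integral_pow]
  have hgeom := hpoly_geom ξ k n
  have hfac : ((0+k+1) ! : ℝ) = ((k:ℝ)+1) * (k ! : ℝ) := by
    rw [show 0+k+1 = k+1 from by omega, Nat.factorial_succ]
    push_cast; ring
  rw [hfac, Nat.factorial_zero]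
  have hk : (k:ℝ)+1 ≠ 0 := by positivity
  have hkf : (k ! : ℝ) ≠ 0 := by positivity
  field_simp
  linear_combination (-1 : ℝ) * hgeom


lemma alg_gen (κ ρ a c A B C D E KF KG PF PG F G : ℝ)
    (hKG : KG = (κ+1)*KF) (hPG : PG = (ρ+1)*PF) (hG : G = (ρ+κ+2)*F)
    (hFn : F ≠ 0) (hGn : G ≠ 0)
    (hdiff : A - C = (a - c) * E) (hkey : a*B - c*D = (a-c)*E) :
    (KG*PF/G) * A - a * (KF*PF/F) * B + (c * (KF*PF/F) * D - (KG*PF/G) * C)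
      = (c-a) * (KF*PG/G) * E := by
  have eF : F⁻¹ * F = 1 := inv_mul_cancel₀ hFn
  have eG : G⁻¹ * G = 1 := inv_mul_cancel₀ hGn
  linear_combination (KG*PF*G⁻¹)*hdiff - (KF*PF*F⁻¹)*hkey + ((a-c)*E*PF*G⁻¹)*hKG
    + ((a-c)*E*KF*G⁻¹)*hPG - ((a-c)*E*KF*PF*G⁻¹*F⁻¹)*hG
    - ((a-c)*E*KF*PF*(ρ+κ+2)*G⁻¹)*eF + ((a-c)*E*KF*PF*F⁻¹)*eG

lemma alg_main (κ ρ a u b c A B C D E KF KG PF PG F G : ℝ)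
    (hKG : KG = (κ+1)*KF) (hPG : PG = (ρ+1)*PF) (hG : G = (ρ+κ+2)*F)
    (hFn : F ≠ 0) (hGn : G ≠ 0)
    (hdiff : A - C = (a - c) * E) (hkey : a*B - c*D = (a-c)*E)
    (hE1 : u - a = 0 → (KG*PF/G) * A = a * (KF*PF/F) * B)
    (hE2 : c - b = 0 → c * (KF*PF/F) * D = (KG*PF/G) * C) :
    (u-a)⁻¹ * ((u-a) * (KG*PF/G) * A)
      + (-(a*(u-a)⁻¹)) * ((u-a) * (KF*PF/F) * B)
      + ((-(c-b)⁻¹) * ((c-b) * (KG*PF/G) * C)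
         + c*(c-b)⁻¹ * ((c-b) * (KF*PF/F) * D))
    = (c-a) * (KF*PG/G) * E := by
  have core := alg_gen κ ρ a c A B C D E KF KG PF PG F G hKG hPG hG hFn hGn hdiff hkey
  by_cases h1 : u - a = 0
  · by_cases h2 : c - b = 0
    · rw [h1, h2]
      simp only [inv_zero, zero_mul, mul_zero, neg_zero, zero_add, add_zero]
      linear_combination core - hE1 h1 - hE2 h2
    · rw [h1]
      have e2 : (c-b)⁻¹ * (c-b) = 1 := inv_mul_cancel₀ h2
      simp only [inv_zero, zero_mul, mul_zero, neg_zero, zero_add, add_zero]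
      linear_combination core - hE1 h1
        + (c * (KF*PF/F) * D - (KG*PF/G) * C) * e2
  · have e1 : (u-a)⁻¹ * (u-a) = 1 := inv_mul_cancel₀ h1
    by_cases h2 : c - b = 0
    · rw [h2]
      simp only [inv_zero, zero_mul, mul_zero, neg_zero, zero_add, add_zero]
      linear_combination core - hE2 h2
        + ((KG*PF/G) * A - a * (KF*PF/F) * B) * e1
    · have e2 : (c-b)⁻¹ * (c-b) = 1 := inv_mul_cancel₀ h2
      linear_combination core
        + ((KG*PF/G) * A - a * (KF*PF/F) * B) * e1
        + (c * (KF*PF/F) * D - (KG*PF/G) * C) * e2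

lemma algE1 (κ ρ a A B KF KG PF F G : ℝ) (hKG : KG = (κ+1)*KF) (hG : G = (ρ+κ+2)*F)
    (hFn : F ≠ 0) (hGn : G ≠ 0) (hc1 : (κ+1)*A = a*(ρ+2+κ)*B) :
    (KG*PF/G)*A = a*(KF*PF/F)*B := by
  have eF : F⁻¹ * F = 1 := inv_mul_cancel₀ hFn
  have eG : G⁻¹ * G = 1 := inv_mul_cancel₀ hGn
  linear_combination (PF*G⁻¹*A)*hKG + (KF*PF*G⁻¹)*hc1 - (a*KF*PF*B*G⁻¹*F⁻¹)*hG
    - (a*KF*PF*B*(ρ+κ+2)*G⁻¹)*eF + (a*KF*PF*B*F⁻¹)*eG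

lemma algE2 (κ ρ c C D KF KG PF F G : ℝ) (hKG : KG = (κ+1)*KF) (hG : G = (ρ+κ+2)*F)
    (hFn : F ≠ 0) (hGn : G ≠ 0) (hc2 : (κ+1)*C = c*(ρ+2+κ)*D) :
    c*(KF*PF/F)*D = (KG*PF/G)*C := by
  have eF : F⁻¹ * F = 1 := inv_mul_cancel₀ hFn
  have eG : G⁻¹ * G = 1 := inv_mul_cancel₀ hGn
  linear_combination -(PF*G⁻¹*C)*hKG - (KF*PF*G⁻¹)*hc2 + (c*KF*PF*D*G⁻¹*F⁻¹)*hG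
    + (c*KF*PF*D*(ρ+κ+2)*G⁻¹)*eF - (c*KF*PF*D*F⁻¹)*eG

open intervalIntegral MeasureTheory in
theorem cdB_moment (ξ : ℕ → ℝ) (hξ : Monotone ξ) (p : ℕ) :
    ∀ k n, ∫ x in (ξ n)..(ξ (n+p+1)), x^k * coxDeBoor ξ p n x
      = (ξ (n+p+1) - ξ n) * ((k ! : ℝ) * (p ! : ℝ) / ((p+k+1) ! : ℝ)) * hpoly ξ k n (p+2) := by
  induction p with
  | zero => intro k n; exact cdB_moment_base ξ hξ k n
  | succ p ih =>
    intro k n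
    rw [show n+(p+1)+1 = n+p+2 from by omega]
    have hb : ∀ᵐ (x:ℝ) ∂(volume : Measure ℝ), x ≠ ξ (n+1) := by
      rw [MeasureTheory.ae_iff]
      simpa using (Real.volume_singleton : volume ({ξ (n+1)} : Set ℝ) = 0)
    have Ja : ∀ m : ℕ, ∫ x in (ξ n)..(ξ (n+p+2)), x^m * coxDeBoor ξ p n x
        = ∫ x in (ξ n)..(ξ (n+p+1)), x^m * coxDeBoor ξ p n x := by
      intro m
      have h1 := cdB_mul_intervalIntegrable ξ p n (fun x => x^m) (by continuity)
        (ξ n) (ξ (n+p+1))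
      have h2 := cdB_mul_intervalIntegrable ξ p n (fun x => x^m) (by continuity)
        (ξ (n+p+1)) (ξ (n+p+2))
      rw [← intervalIntegral.integral_add_adjacent_intervals h1 h2]
      have hz : ∫ x in (ξ (n+p+1))..(ξ (n+p+2)), x^m * coxDeBoor ξ p n x = 0 := by
        have heq : Set.EqOn (fun x => x^m * coxDeBoor ξ p n x) (fun _ => (0:ℝ))
            (Set.uIcc (ξ (n+p+1)) (ξ (n+p+2))) := by
          intro x hx
          rw [Set.uIcc_of_le (hξ (by omega : n+p+1 ≤ n+p+2))] at hx
          simp only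
          rw [cdB_outside_right ξ hξ p n x hx.1, mul_zero]
        rw [intervalIntegral.integral_congr heq, intervalIntegral.integral_zero]
      rw [hz, add_zero]
    have Jb : ∀ m : ℕ, ∫ x in (ξ n)..(ξ (n+p+2)), x^m * coxDeBoor ξ p (n+1) x
        = ∫ x in (ξ (n+1))..(ξ (n+p+2)), x^m * coxDeBoor ξ p (n+1) x := by
      intro m
      have h1 := cdB_mul_intervalIntegrable ξ p (n+1) (fun x => x^m) (by continuity)
        (ξ n) (ξ (n+1))
      have h2 := cdB_mul_intervalIntegrable ξ p (n+1) (fun x => x^m) (by continuity)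
        (ξ (n+1)) (ξ (n+p+2))
      rw [← intervalIntegral.integral_add_adjacent_intervals h1 h2]
      have hz : ∫ x in (ξ n)..(ξ (n+1)), x^m * coxDeBoor ξ p (n+1) x = 0 := by
        have : ∫ x in (ξ n)..(ξ (n+1)), x^m * coxDeBoor ξ p (n+1) x
            = ∫ x in (ξ n)..(ξ (n+1)), (0:ℝ) := by
          apply intervalIntegral.integral_congr_ae
          filter_upwards [hb] with x hx hmem
          rw [Set.uIoc_of_le (hξ (by omega : n ≤ n+1))] at hmem
          rw [cdB_outside_left ξ hξ p (n+1) x (lt_of_le_of_ne hmem.2 hx), mul_zero]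
        rw [this, intervalIntegral.integral_zero]
      rw [hz, zero_add]
    have h1 : IntervalIntegrable (fun x =>
        ((ξ (n+p+1) - ξ n)⁻¹ * x + (-(ξ n * (ξ (n+p+1) - ξ n)⁻¹))) * x^k * coxDeBoor ξ p n x)
        volume (ξ n) (ξ (n+p+2)) :=
      cdB_mul_intervalIntegrable ξ p n _ (by continuity) _ _
    have h2 : IntervalIntegrable (fun x =>
        ((-(ξ (n+p+2) - ξ (n+1))⁻¹) * x + ξ (n+p+2) * (ξ (n+p+2) - ξ (n+1))⁻¹) * x^k
          * coxDeBoor ξ p (n+1) x) volume (ξ n) (ξ (n+p+2)) :=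
      cdB_mul_intervalIntegrable ξ p (n+1) _ (by continuity) _ _
    have split : ∫ x in (ξ n)..(ξ (n+p+2)), x^k * coxDeBoor ξ (p+1) n x
        = (∫ x in (ξ n)..(ξ (n+p+2)),
            ((ξ (n+p+1) - ξ n)⁻¹ * x + (-(ξ n * (ξ (n+p+1) - ξ n)⁻¹))) * x^k
              * coxDeBoor ξ p n x)
          + (∫ x in (ξ n)..(ξ (n+p+2)),
            ((-(ξ (n+p+2) - ξ (n+1))⁻¹) * x + ξ (n+p+2) * (ξ (n+p+2) - ξ (n+1))⁻¹) * x^k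
              * coxDeBoor ξ p (n+1) x) := by
      rw [← intervalIntegral.integral_add h1 h2]
      apply intervalIntegral.integral_congr
      intro x hx
      simp only [cdB_succ_def]
      ring
    have ihk1 := ih (k+1) (n+1)
    have ihk0 := ih k (n+1)
    rw [show n+1+p+1 = n+p+2 from by omega] at ihk1 ihk0
    rw [split, cdB_linear_moment, cdB_linear_moment, Ja (k+1), Ja k, Jb (k+1), Jb k,
      ih (k+1) n, ih k n, ihk1, ihk0]
    rw [show p+1+k+1 = p+(k+1)+1 from by omega, show p+1+2 = p+3 from by omega]
    have hKG : (((k+1)!:ℕ) : ℝ) = ((k:ℝ)+1) * ((k !:ℕ) : ℝ) := by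
      rw [Nat.factorial_succ]; push_cast; ring
    have hPG : (((p+1)!:ℕ) : ℝ) = ((p:ℝ)+1) * ((p !:ℕ) : ℝ) := by
      rw [Nat.factorial_succ]; push_cast; ring
    have hG : (((p+(k+1)+1)!:ℕ) : ℝ) = ((p:ℝ)+(k:ℝ)+2) * (((p+k+1)!:ℕ) : ℝ) := by
      rw [show p+(k+1)+1 = (p+k+1)+1 from by omega, Nat.factorial_succ]; push_cast; ring
    have hFn : (((p+k+1)!:ℕ) : ℝ) ≠ 0 := Nat.cast_ne_zero.mpr (Nat.factorial_ne_zero _)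
    have hGn : (((p+(k+1)+1)!:ℕ) : ℝ) ≠ 0 := Nat.cast_ne_zero.mpr (Nat.factorial_ne_zero _)
    have hdiff := hpoly_diff ξ k (p+1) n
    have hkey := hpoly_key2 ξ k (p+1) n
    rw [show p+1+1 = p+2 from by omega, show n+(p+1)+1 = n+p+2 from by omega,
      show p+1+2 = p+3 from by omega] at hdiff hkey
    refine alg_main (k:ℝ) (p:ℝ) (ξ n) (ξ (n+p+1)) (ξ (n+1)) (ξ (n+p+2))
      (hpoly ξ (k+1) n (p+2)) (hpoly ξ k n (p+2)) (hpoly ξ (k+1) (n+1) (p+2))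
      (hpoly ξ k (n+1) (p+2)) (hpoly ξ k n (p+3))
      ((k ! : ℕ) : ℝ) (((k+1)! : ℕ) : ℝ) ((p ! : ℕ) : ℝ) (((p+1)! : ℕ) : ℝ)
      (((p+k+1)! : ℕ) : ℝ) (((p+(k+1)+1)! : ℕ) : ℝ)
      hKG hPG hG hFn hGn hdiff hkey ?_ ?_
    · intro h0
      apply algE1 (k:ℝ) (p:ℝ) (ξ n) _ _ _ _ _ _ _ hKG hG hFn hGn
      have hup : ξ (n+p+1) = ξ n := by linarith
      have hcst : ∀ i, i < p+2 → ξ (n+i) = ξ n := fun i hi =>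
        le_antisymm (le_trans (hξ (by omega : n+i ≤ n+p+1)) (le_of_eq hup))
          (hξ (by omega))
      have hc1 := hpoly_const ξ (ξ n) k (p+2) n hcst
      push_cast at hc1 ⊢
      linear_combination hc1
    · intro h0
      apply algE2 (k:ℝ) (p:ℝ) (ξ (n+p+2)) _ _ _ _ _ _ _ hKG hG hFn hGn
      have hdown : ξ (n+p+2) = ξ (n+1) := by linarith
      have hcst : ∀ i, i < p+2 → ξ (n+1+i) = ξ (n+1) := fun i hi =>
        le_antisymm (le_trans (hξ (by omega : n+1+i ≤ n+p+2)) (le_of_eq hdown))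
          (hξ (by omega))
      have hc2 := hpoly_const ξ (ξ (n+1)) k (p+2) (n+1) hcst
      rw [← hdown] at hc2
      push_cast at hc2 ⊢
      linear_combination hc2

/-- The integral of `B_{ξ,p,n}` over `[ξ_n, ξ_{n+p+1}]` equals `(ξ_{n+p+1} - ξ_n)/(p+1)`. -/
theorem bspline_integral (ξ : ℕ → ℝ) (hξ : Monotone ξ) (p n : ℕ) (hp : 1 ≤ p)
    (h : ξ n < ξ (n + p + 1)) :
    ∫ x in (ξ n)..(ξ (n + p + 1)), coxDeBoor ξ p n x
      = (ξ (n + p + 1) - ξ n) / ((p : ℝ) + 1) := by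
  have H := cdB_moment ξ hξ p 0 n
  simp only [pow_zero, one_mul, hpoly_zero, Nat.factorial_zero, Nat.add_zero] at H
  rw [H, Nat.factorial_succ]
  have hpf : ((p ! : ℕ) : ℝ) ≠ 0 := Nat.cast_ne_zero.mpr (Nat.factorial_ne_zero _)
  have hp1 : ((p:ℝ)+1) ≠ 0 := by positivity
  push_cast
  field_simp
end

section
/- De Boor algorithm correctness: if s(x) = Σ_{n=1}^N w_n B_{ξ,p,n}(x) and x ∈ [ξ_m, ξ_{m+1}) with p+1 ≤ m ≤ N, then applying the recursion w_{n,q+1} = ((x−ξ_n)/(ξ_{n+p−q}−ξ_n)) w_{n,q} + ((ξ_{n+p−q}−x)/(ξ_{n+p−q}−ξ_n)) w_{n−1,q} for n = m−p+q+1,...,m and q = 0,...,p−1, starting from w_{n,0} = w_n, yields s(x) = w_{m,p}. -/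
lemma coxDeBoor_zero_left (ξ : ℕ → ℝ) (hmono : Monotone ξ) (x : ℝ) :
    ∀ q n, x < ξ n → coxDeBoor ξ q n x = 0
  | 0, n, h => by
    rw [coxDeBoor, if_neg]; rintro ⟨h1, _⟩; linarith
  | (q+1), n, h => by
    have h2 : x < ξ (n+1) := lt_of_lt_of_le h (hmono (Nat.le_succ n))
    rw [coxDeBoor, coxDeBoor_zero_left ξ hmono x q n h,
      coxDeBoor_zero_left ξ hmono x q (n+1) h2]
    ring

lemma coxDeBoor_zero_right (ξ : ℕ → ℝ) (hmono : Monotone ξ) (x : ℝ) :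
    ∀ q n, ξ (n + q + 1) ≤ x → coxDeBoor ξ q n x = 0
  | 0, n, h => by
    rw [coxDeBoor, if_neg]; rintro ⟨_, h2⟩; exact absurd h (not_le.2 h2)
  | (q+1), n, h => by
    have h1 : ξ (n + q + 1) ≤ x := le_trans (hmono (by omega)) h
    have h2 : ξ ((n+1) + q + 1) ≤ x := by
      have : (n+1) + q + 1 = n + (q+1) + 1 := by omega
      rw [this]; exact h
    rw [coxDeBoor, coxDeBoor_zero_right ξ hmono x q n h1,
      coxDeBoor_zero_right ξ hmono x q (n+1) h2]
    ring

lemma openKnots_mono (N p : ℕ) (h : p < N) : Monotone (openKnots N p) := by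
  intro i j hij
  have hd : (0:ℝ) < (N:ℝ) - p := by
    have : (p:ℝ) + 1 ≤ N := by exact_mod_cast h
    linarith
  unfold openKnots
  have : ((i:ℝ) - p - 1) ≤ ((j:ℝ) - p - 1) := by
    have : (i:ℝ) ≤ j := by exact_mod_cast hij
    linarith
  gcongr

/-- Correctness of the de Boor algorithm: the recursively computed weight `w m p`
equals the spline value `s(x) = ∑ w_n B_{ξ,p,n}(x)` for `x ∈ [ξ_m, ξ_{m+1})`. -/
theorem deBoor_correct (N p m : ℕ) (hm1 : p + 1 ≤ m) (hm2 : m ≤ N) (x : ℝ)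
    (hx1 : openKnots N p m ≤ x) (hx2 : x < openKnots N p (m + 1))
    (w : ℕ → ℕ → ℝ)
    (hrec : ∀ q, q < p → ∀ n, m - p + q + 1 ≤ n → n ≤ m →
      w n (q + 1) =
        (x - openKnots N p n) / (openKnots N p (n + p - q) - openKnots N p n) * w n q
          + (openKnots N p (n + p - q) - x) / (openKnots N p (n + p - q) - openKnots N p n)
            * w (n - 1) q) :
    ∑ n ∈ Finset.Icc 1 N, w n 0 * coxDeBoor (openKnots N p) p n x = w m p := by
  set ξ : ℕ → ℝ := openKnots N p with hξ
  have hpN : p < N := lt_of_lt_of_le (Nat.lt_of_succ_le hm1) hm2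
  have hmono : Monotone ξ := openKnots_mono N p hpN
  set S : ℕ → ℝ := fun q => ∑ n ∈ Finset.Icc (m - p + q) m, w n q * coxDeBoor ξ (p - q) n x
    with hS
  have step : ∀ q, q < p → S q = S (q+1) := by
    intro q hq
    set r := p - q - 1 with hr
    have hpq : p - q = r + 1 := by omega
    have hpq1 : p - (q+1) = r := by omega
    set a := m - p + q with ha
    have ham : a + 1 ≤ m := by omega
    set f : ℕ → ℝ := fun n =>
      (x - ξ n) / (ξ (n + r + 1) - ξ n) * w n q * coxDeBoor ξ r n x with hf
    set g : ℕ → ℝ := fun n =>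
      (ξ (n + r + 1) - x) / (ξ (n + r + 1) - ξ n) * w (n - 1) q * coxDeBoor ξ r n x with hg
    have expand : ∀ n, w n q * coxDeBoor ξ (p - q) n x = f n + g (n + 1) := by
      intro n
      rw [hpq, coxDeBoor, hf, hg]
      simp only
      have e1 : n + 1 + r + 1 = n + r + 2 := by omega
      have e2 : n + 1 - 1 = n := by omega
      rw [e1, e2]
      ring
    have sum_shift : ∑ n ∈ Finset.Icc a m, g (n + 1) = ∑ n ∈ Finset.Icc (a+1) (m+1), g n := by
      rw [← Finset.map_add_right_Icc a m 1, Finset.sum_map]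
      rfl
    have fa : f a = 0 := by
      have : ξ (a + r + 1) ≤ x := by
        have : a + r + 1 = m := by omega
        rw [this]; exact hx1
      rw [hf]; simp only
      rw [coxDeBoor_zero_right ξ hmono x r a this, mul_zero]
    have gm : g (m + 1) = 0 := by
      rw [hg]; simp only
      rw [coxDeBoor_zero_left ξ hmono x r (m+1) hx2, mul_zero]
    have split1 : ∑ n ∈ Finset.Icc a m, f n = ∑ n ∈ Finset.Icc (a+1) m, f n := by
      have : Finset.Icc a m = insert a (Finset.Icc (a+1) m) := by
        ext k; simp [Finset.mem_Icc]; omega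
      rw [this, Finset.sum_insert (by simp [Finset.mem_Icc]), fa, zero_add]
    have split2 : ∑ n ∈ Finset.Icc (a+1) (m+1), g n = ∑ n ∈ Finset.Icc (a+1) m, g n := by
      have : Finset.Icc (a+1) (m+1) = insert (m+1) (Finset.Icc (a+1) m) := by
        ext k; simp [Finset.mem_Icc]; omega
      rw [this, Finset.sum_insert (by simp [Finset.mem_Icc]), gm, zero_add]
    have combine : ∀ n ∈ Finset.Icc (a+1) m, f n + g n = w n (q+1) * coxDeBoor ξ r n x := by
      intro n hn
      rw [Finset.mem_Icc] at hn
      have hrw := hrec q hq n (by omega) hn.2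
      have e3 : n + p - q = n + r + 1 := by omega
      rw [e3] at hrw
      rw [hf, hg]; simp only
      rw [hrw]; ring
    calc S q = ∑ n ∈ Finset.Icc a m, (f n + g (n + 1)) := by
          simp only [hS]; exact Finset.sum_congr rfl fun n _ => expand n
      _ = ∑ n ∈ Finset.Icc a m, f n + ∑ n ∈ Finset.Icc a m, g (n + 1) :=
          Finset.sum_add_distrib
      _ = ∑ n ∈ Finset.Icc (a+1) m, f n + ∑ n ∈ Finset.Icc (a+1) m, g n := by
          rw [split1, sum_shift, split2]
      _ = ∑ n ∈ Finset.Icc (a+1) m, (f n + g n) := Finset.sum_add_distrib.symm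
      _ = ∑ n ∈ Finset.Icc (a+1) m, w n (q+1) * coxDeBoor ξ r n x :=
          Finset.sum_congr rfl combine
      _ = S (q+1) := by
          simp only [hS]
          have : m - p + (q+1) = a + 1 := by omega
          rw [this, hpq1]
  have all : ∀ q, q ≤ p → S 0 = S q := by
    intro q hqp
    induction q with
    | zero => rfl
    | succ k ih => rw [ih (by omega), step k (by omega)]
  have base : S p = w m p := by
    simp only [hS]
    have h1 : m - p + p = m := by omega
    have h2 : p - p = 0 := by omega
    rw [h1, h2, Finset.Icc_self, Finset.sum_singleton, coxDeBoor, if_pos ⟨hx1, hx2⟩, mul_one]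
  have init : ∑ n ∈ Finset.Icc 1 N, w n 0 * coxDeBoor ξ p n x = S 0 := by
    simp only [hS, Nat.add_zero, Nat.sub_zero]
    have hsub : Finset.Icc (m - p) m ⊆ Finset.Icc 1 N := by
      intro k hk; rw [Finset.mem_Icc] at *; omega
    rw [← Finset.sum_subset hsub]
    intro k hk hk2
    rw [Finset.mem_Icc] at hk hk2
    rcases (by omega : k < m - p ∨ m < k) with h | h
    · have : ξ (k + p + 1) ≤ x := le_trans (hmono (by omega : k + p + 1 ≤ m)) hx1
      rw [coxDeBoor_zero_right ξ hmono x p k this, mul_zero]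
    · have : x < ξ k := lt_of_lt_of_le hx2 (hmono (by omega : m + 1 ≤ k))
      rw [coxDeBoor_zero_left ξ hmono x p k this, mul_zero]
  rw [init, all p le_rfl, base]
end
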